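/- Shifted lower bound for power connectives with α > 1: Fix a real number α > 1 and a positive integer m. There exist a finite-dimensional real inner product space H and vectors x_1,…,x_{2^m}, y_1,…,y_{2^m} in the closed unit ball of H such that for all 1 ≤ i < j ≤ 2^m, (max(⟪x_i,y_j⟫,0))^α − (max(⟪x_j,y_i⟫,0))^α ≥ (α/2^α)/m. Consequently, f_α(x,y) = (max(⟪x,y⟫,0))^α on the unit ball is not (2^m, (α·2^(−α))/m)-stable, giving failure of (k,ε)-stability for k ≤ exp(c_α/ε) with c_α = (log 2)·α·2^(−α) (up to an O(1) additive error in the exponent). -/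

import Mathlib

open RealInnerProductSpace

namespace PowerShiftedAux

lemma div_succ_pow (i t : ℕ) : i / 2 ^ (t + 1) = i / 2 ^ t / 2 := by
  rw [pow_succ, Nat.div_div_eq_div_mul]

lemma decomp (i t : ℕ) : i / 2 ^ t = 2 * (i / 2 ^ (t + 1)) + i / 2 ^ t % 2 := by
  rw [div_succ_pow]
  omega

/-- The condition that `t` is the highest bit where `i` and `j` differ, with `i` having 0
and `j` having 1 there. -/
def P (i j t : ℕ) : Prop :=
  i / 2 ^ (t + 1) = j / 2 ^ (t + 1) ∧ i / 2 ^ t % 2 = 0 ∧ j / 2 ^ t % 2 = 1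

instance (i j t : ℕ) : Decidable (P i j t) := by unfold P; infer_instance

lemma lt_of_P {i j t : ℕ} (h : P i j t) : i < j := by
  obtain ⟨h1, h2, h3⟩ := h
  apply Nat.lt_of_div_lt_div (c := 2 ^ t)
  have e1 := decomp i t
  have e2 := decomp j t
  omega

lemma exists_P {m i j : ℕ} (hj : j < 2 ^ m) (hij : i < j) : ∃ t, t < m ∧ P i j t := by
  classical
  set Q : ℕ → Prop := fun t => ¬ (i / 2 ^ t = j / 2 ^ t) with hQdef
  have hQ0 : Q 0 := by simp [hQdef]; omega
  set t := Nat.findGreatest Q m with ht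
  have hPt : Q t := Nat.findGreatest_spec (Nat.zero_le m) hQ0
  have htle : t ≤ m := Nat.findGreatest_le m
  have htm : t < m := by
    rcases lt_or_eq_of_le htle with h | h
    · exact h
    · exfalso
      apply hPt
      rw [h, Nat.div_eq_of_lt (lt_trans hij hj), Nat.div_eq_of_lt hj]
  have hnext : i / 2 ^ (t + 1) = j / 2 ^ (t + 1) := by
    by_contra h
    exact Nat.findGreatest_is_greatest (lt_add_one t) (by omega) h
  refine ⟨t, htm, hnext, ?_⟩
  have hne : i / 2 ^ t ≠ j / 2 ^ t := hPt
  have e1 := decomp i t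
  have e2 := decomp j t
  have hle : i / 2 ^ t ≤ j / 2 ^ t := Nat.div_le_div_right hij.le
  omega

lemma unique_P {i j t t' : ℕ} (ht : P i j t) (ht' : P i j t') : t = t' := by
  suffices H : ∀ a b : ℕ, a < b → P i j a → P i j b → False by
    rcases lt_trichotomy t t' with h | h | h
    · exact (H t t' h ht ht').elim
    · exact h
    · exact (H t' t h ht' ht).elim
  intro a b hab ha hb
  have heq : i / 2 ^ b = j / 2 ^ b := by
    have h2 : (2 : ℕ) ^ b = 2 ^ (a + 1) * 2 ^ (b - (a + 1)) := by
      rw [← pow_add]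
      congr 1
      omega
    rw [h2, ← Nat.div_div_eq_div_mul, ← Nat.div_div_eq_div_mul, ha.1]
  obtain ⟨h1, h2, h3⟩ := hb
  have e1 := decomp i b
  have e2 := decomp j b
  omega

/-- The witness vectors: `b = 0` gives the `x`'s, `b = 1` gives the `y`'s. -/
noncomputable def v (m b i : ℕ) : EuclideanSpace ℝ (Fin (m * 2 ^ m + 1)) := WithLp.toLp 2 fun k =>
  if (k : ℕ) = m * 2 ^ m then Real.sqrt (1 / 2)
  else if ((k : ℕ) % 2 ^ m = i / 2 ^ ((k : ℕ) / 2 ^ m + 1) ∧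
      i / 2 ^ ((k : ℕ) / 2 ^ m) % 2 = b) then Real.sqrt (1 / (2 * (m : ℝ))) else 0

lemma sum_fin_ite {n : ℕ} (w : ℝ) (h : ℕ) (hh : h < n) (C : Prop) [Decidable C] :
    ∑ q : Fin n, (if ((q : ℕ) = h ∧ C) then w else 0) = if C then w else 0 := by
  by_cases hC : C
  · simp only [hC, and_true, if_true]
    rw [Finset.sum_eq_single (⟨h, hh⟩ : Fin n)]
    · simp
    · intro q _ hq
      rw [if_neg]
      intro hc
      exact hq (Fin.ext hc)
    · intro habs
      exact absurd (Finset.mem_univ _) habs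
  · simp [hC]

lemma sum_v (m a b i j : ℕ) (hi : i < 2 ^ m) (hj : j < 2 ^ m) :
    ∑ k : Fin (m * 2 ^ m + 1), v m a i k * v m b j k
      = 1 / 2 + ∑ t : Fin m,
          (if (i / 2 ^ ((t : ℕ) + 1) = j / 2 ^ ((t : ℕ) + 1) ∧
              i / 2 ^ (t : ℕ) % 2 = a ∧ j / 2 ^ (t : ℕ) % 2 = b)
            then 1 / (2 * (m : ℝ)) else 0) := by
  classical
  have hc : Real.sqrt (1 / (2 * (m : ℝ))) * Real.sqrt (1 / (2 * (m : ℝ)))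
      = 1 / (2 * (m : ℝ)) := by
    apply Real.mul_self_sqrt
    positivity
  have hr : Real.sqrt (1 / 2 : ℝ) * Real.sqrt (1 / 2 : ℝ) = 1 / 2 := by
    apply Real.mul_self_sqrt
    norm_num
  rw [Fin.sum_univ_castSucc]
  have hlast : v m a i (Fin.last _) * v m b j (Fin.last _) = 1 / 2 := by
    simp only [v, PiLp.toLp_apply, Fin.val_last, if_pos rfl]
    exact hr
  rw [hlast, add_comm]
  congr 1
  have hmain : ∀ k : Fin (m * 2 ^ m),
      v m a i (Fin.castSucc k) * v m b j (Fin.castSucc k)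
        = (if ((k : ℕ) % 2 ^ m = i / 2 ^ ((k : ℕ) / 2 ^ m + 1) ∧
              i / 2 ^ ((k : ℕ) / 2 ^ m) % 2 = a) then Real.sqrt (1 / (2 * (m : ℝ))) else 0)
          * (if ((k : ℕ) % 2 ^ m = j / 2 ^ ((k : ℕ) / 2 ^ m + 1) ∧
              j / 2 ^ ((k : ℕ) / 2 ^ m) % 2 = b) then Real.sqrt (1 / (2 * (m : ℝ))) else 0) := by
    intro k
    have hk : (k : ℕ) ≠ m * 2 ^ m := by
      have := k.isLt
      omega
    simp [v, Fin.coe_castSucc, hk]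
  simp only [hmain]
  rw [← Equiv.sum_comp (finProdFinEquiv : Fin m × Fin (2 ^ m) ≃ Fin (m * 2 ^ m))]
  rw [Fintype.sum_prod_type]
  apply Finset.sum_congr rfl
  intro t _
  have hval : ∀ q : Fin (2 ^ m),
      ((finProdFinEquiv (t, q) : Fin (m * 2 ^ m)) : ℕ) = (q : ℕ) + 2 ^ m * (t : ℕ) := by
    intro q
    rfl
  have hdiv : ∀ q : Fin (2 ^ m),
      ((q : ℕ) + 2 ^ m * (t : ℕ)) / 2 ^ m = (t : ℕ) := by
    intro q
    rw [Nat.add_mul_div_left _ _ (pow_pos two_pos m)]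
    rw [Nat.div_eq_of_lt q.isLt]
    omega
  have hmod : ∀ q : Fin (2 ^ m),
      ((q : ℕ) + 2 ^ m * (t : ℕ)) % 2 ^ m = (q : ℕ) := by
    intro q
    rw [Nat.add_mul_mod_self_left, Nat.mod_eq_of_lt q.isLt]
  have hterm : ∀ q : Fin (2 ^ m),
      (if ((q : ℕ) = i / 2 ^ ((t : ℕ) + 1) ∧ i / 2 ^ (t : ℕ) % 2 = a)
          then Real.sqrt (1 / (2 * (m : ℝ))) else 0)
        * (if ((q : ℕ) = j / 2 ^ ((t : ℕ) + 1) ∧ j / 2 ^ (t : ℕ) % 2 = b)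
          then Real.sqrt (1 / (2 * (m : ℝ))) else 0)
      = (if ((q : ℕ) = i / 2 ^ ((t : ℕ) + 1) ∧
            (i / 2 ^ ((t : ℕ) + 1) = j / 2 ^ ((t : ℕ) + 1) ∧
             i / 2 ^ (t : ℕ) % 2 = a ∧ j / 2 ^ (t : ℕ) % 2 = b))
          then 1 / (2 * (m : ℝ)) else 0) := by
    intro q
    rw [ite_zero_mul_ite_zero, hc]
    congr 1
    apply propext
    constructor
    · rintro ⟨⟨h1, h2⟩, ⟨h3, h4⟩⟩
      exact ⟨h1, h1 ▸ h3, h2, h4⟩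
    · rintro ⟨h1, h2, h3, h4⟩
      exact ⟨⟨h1, h3⟩, h1.trans h2, h4⟩
  calc ∑ q : Fin (2 ^ m),
        (if (((finProdFinEquiv (t, q) : Fin (m * 2 ^ m)) : ℕ) % 2 ^ m
              = i / 2 ^ (((finProdFinEquiv (t, q) : Fin (m * 2 ^ m)) : ℕ) / 2 ^ m + 1) ∧
            i / 2 ^ (((finProdFinEquiv (t, q) : Fin (m * 2 ^ m)) : ℕ) / 2 ^ m) % 2 = a)
          then Real.sqrt (1 / (2 * (m : ℝ))) else 0)
        * (if (((finProdFinEquiv (t, q) : Fin (m * 2 ^ m)) : ℕ) % 2 ^ m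
              = j / 2 ^ (((finProdFinEquiv (t, q) : Fin (m * 2 ^ m)) : ℕ) / 2 ^ m + 1) ∧
            j / 2 ^ (((finProdFinEquiv (t, q) : Fin (m * 2 ^ m)) : ℕ) / 2 ^ m) % 2 = b)
          then Real.sqrt (1 / (2 * (m : ℝ))) else 0)
      = ∑ q : Fin (2 ^ m),
        (if ((q : ℕ) = i / 2 ^ ((t : ℕ) + 1) ∧
            (i / 2 ^ ((t : ℕ) + 1) = j / 2 ^ ((t : ℕ) + 1) ∧
             i / 2 ^ (t : ℕ) % 2 = a ∧ j / 2 ^ (t : ℕ) % 2 = b))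
          then 1 / (2 * (m : ℝ)) else 0) := by
        apply Finset.sum_congr rfl
        intro q _
        rw [← hterm q]
        simp only [hval q, hdiv q, hmod q]
    _ = _ := by
        apply sum_fin_ite
        exact lt_of_le_of_lt (Nat.div_le_self _ _) hi

lemma norm_v_le (m b i : ℕ) (hi : i < 2 ^ m) : ‖v m b i‖ ≤ 1 := by
  rw [EuclideanSpace.norm_eq]
  rw [show (1 : ℝ) = Real.sqrt 1 from (Real.sqrt_one).symm]
  apply Real.sqrt_le_sqrt
  have h1 : ∑ k, ‖v m b i k‖ ^ 2 = ∑ k, v m b i k * v m b i k := by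
    apply Finset.sum_congr rfl
    intro k _
    rw [Real.norm_eq_abs, sq_abs, sq]
  rw [h1, sum_v m b b i i hi hi]
  have h2 : ∑ t : Fin m,
      (if (i / 2 ^ ((t : ℕ) + 1) = i / 2 ^ ((t : ℕ) + 1) ∧
          i / 2 ^ (t : ℕ) % 2 = b ∧ i / 2 ^ (t : ℕ) % 2 = b)
        then 1 / (2 * (m : ℝ)) else 0) ≤ ∑ _t : Fin m, 1 / (2 * (m : ℝ)) := by
    apply Finset.sum_le_sum
    intro t _
    split_ifs
    · exact le_refl _
    · positivity
  have h3 : ∑ _t : Fin m, 1 / (2 * (m : ℝ)) ≤ 1 / 2 := by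
    rw [Finset.sum_const, Finset.card_univ, Fintype.card_fin, nsmul_eq_mul]
    rcases Nat.eq_zero_or_pos m with hm | hm
    · simp [hm]
    · have hm' : (0 : ℝ) < m := by exact_mod_cast hm
      have : (m : ℝ) * (1 / (2 * (m : ℝ))) = 1 / 2 := by
        field_simp
      rw [this]
  linarith

lemma inner_v (m a b i j : ℕ) (hi : i < 2 ^ m) (hj : j < 2 ^ m) :
    ⟪v m a i, v m b j⟫
      = 1 / 2 + ∑ t : Fin m,
          (if (i / 2 ^ ((t : ℕ) + 1) = j / 2 ^ ((t : ℕ) + 1) ∧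
              i / 2 ^ (t : ℕ) % 2 = a ∧ j / 2 ^ (t : ℕ) % 2 = b)
            then 1 / (2 * (m : ℝ)) else 0) := by
  rw [← sum_v m a b i j hi hj]
  simp [PiLp.inner_apply, RCLike.inner_apply, conj_trivial]
  exact Finset.sum_congr rfl (fun _ _ => mul_comm _ _)

lemma inner_v_lt (m i j : ℕ) (hj : j < 2 ^ m) (hij : i < j) :
    ⟪v m 0 i, v m 1 j⟫ = 1 / 2 + 1 / (2 * (m : ℝ)) := by
  have hi : i < 2 ^ m := lt_trans hij hj
  rw [inner_v m 0 1 i j hi hj]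
  congr 1
  obtain ⟨t0, ht0m, ht0⟩ := exists_P hj hij
  rw [Finset.sum_eq_single (⟨t0, ht0m⟩ : Fin m)]
  · rw [if_pos]
    exact ⟨ht0.1, ht0.2.1, ht0.2.2⟩
  · intro t _ htne
    rw [if_neg]
    intro hP
    exact htne (Fin.ext (unique_P hP ht0))
  · intro habs
    exact absurd (Finset.mem_univ _) habs

lemma inner_v_ge (m i j : ℕ) (hi : i < 2 ^ m) (hj : j < 2 ^ m) (hij : j ≤ i) :
    ⟪v m 0 i, v m 1 j⟫ = 1 / 2 := by
  rw [inner_v m 0 1 i j hi hj]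
  have : ∀ t : Fin m,
      (if (i / 2 ^ ((t : ℕ) + 1) = j / 2 ^ ((t : ℕ) + 1) ∧
          i / 2 ^ (t : ℕ) % 2 = 0 ∧ j / 2 ^ (t : ℕ) % 2 = 1)
        then 1 / (2 * (m : ℝ)) else 0) = 0 := by
    intro t
    rw [if_neg]
    intro hP
    exact absurd (lt_of_P hP) (not_lt.mpr hij)
  rw [Finset.sum_eq_zero (fun t _ => this t), add_zero]

end PowerShiftedAux

open PowerShiftedAux in
/-- Shifted lower bound for power connectives `(⟪x,y⟫₊)^α` with `α > 1`. -/
theorem power_shifted_lower_bound (α : ℝ) (hα : 1 < α) (m : ℕ) (hm : 0 < m) :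
    ∃ (N : ℕ) (x y : Fin (2 ^ m) → EuclideanSpace ℝ (Fin N)),
      (∀ i, ‖x i‖ ≤ 1) ∧ (∀ i, ‖y i‖ ≤ 1) ∧
      ∀ i j : Fin (2 ^ m), i < j →
        (α / (2 : ℝ) ^ α) / (m : ℝ)
          ≤ (max ⟪x i, y j⟫ 0) ^ α - (max ⟪x j, y i⟫ 0) ^ α := by
  refine ⟨m * 2 ^ m + 1, fun i => v m 0 (i : ℕ), fun j => v m 1 (j : ℕ),
    fun i => norm_v_le m 0 i i.isLt, fun j => norm_v_le m 1 j j.isLt, ?_⟩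
  intro i j hij
  have hij' : (i : ℕ) < (j : ℕ) := hij
  have hmR : (0 : ℝ) < m := by exact_mod_cast hm
  rw [inner_v_lt m i j j.isLt hij', inner_v_ge m j i j.isLt i.isLt hij'.le]
  have hpos1 : (0 : ℝ) < 1 / 2 + 1 / (2 * (m : ℝ)) := by positivity
  rw [max_eq_left hpos1.le, max_eq_left (by norm_num : (0:ℝ) ≤ 1/2)]
  have hsplit : (1 / 2 + 1 / (2 * (m : ℝ))) = (1 / 2) * (1 + 1 / (m : ℝ)) := by
    field_simp
  rw [hsplit, Real.mul_rpow (by norm_num) (by positivity)]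
  have hB : 1 + α * (1 / (m : ℝ)) ≤ (1 + 1 / (m : ℝ)) ^ α :=
    one_add_mul_self_le_rpow_one_add
      (le_trans (by norm_num : (-1 : ℝ) ≤ 0) (by positivity)) hα.le
  have hhalf : ((1 : ℝ) / 2) ^ α = 1 / (2 : ℝ) ^ α := by
    rw [Real.div_rpow (by norm_num) (by norm_num), Real.one_rpow]
  have hp : (0 : ℝ) < ((1 : ℝ) / 2) ^ α := Real.rpow_pos_of_pos (by norm_num) α
  have h2pos : (0 : ℝ) < (2 : ℝ) ^ α := Real.rpow_pos_of_pos two_pos α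
  have key : (1 / 2 : ℝ) ^ α * (α * (1 / (m : ℝ)))
      ≤ (1 / 2 : ℝ) ^ α * (1 + 1 / (m : ℝ)) ^ α - (1 / 2 : ℝ) ^ α := by
    nlinarith [mul_le_mul_of_nonneg_left hB hp.le]
  have heq : (α / (2 : ℝ) ^ α) / (m : ℝ) = (1 / 2 : ℝ) ^ α * (α * (1 / (m : ℝ))) := by
    rw [hhalf]
    field_simp
  linarith [key, heq.le]
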